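/- Let n ≥ 1, 0 < β < n, 1 < p₁ < n/β, 1/p₂ = 1/p₁ − β/n, 0 < q₁ < ∞, and let α, λ be reals with 0 < 2λ < α. Assume there is C₀ > 0 with ‖I^β g‖_{L^{p₂}} ≤ C₀ ‖g‖_{L^{p₁}} for every g ∈ L^{p₁}(ℝⁿ). Let (λ_j)_{j∈ℤ} be nonnegative reals and for each j let a_j : ℝⁿ → ℝ be measurable, supported in B_j = {x : |x| ≤ 2^j}, with ‖a_j‖_{L^{p₁}} ≤ 2^{−jα}. Then there is a constant C, depending only on q₁, α, λ and C₀, such that sup_{L∈ℤ} 2^{−Lλq₁} ∑_{k ≤ L} 2^{kαq₁} ( ∑_{j ≥ k} λ_j ‖(I^β a_j)·χ_{F_k}‖_{L^{p₂}} )^{q₁} ≤ C · sup_{L∈ℤ} 2^{−Lλq₁} ∑_{j ≤ L} λ_j^{q₁}. -/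

import Mathlib

open MeasureTheory
open scoped ENNReal

private lemma ofReal_rpow_two (a b : ℝ) :
    ENNReal.ofReal ((2:ℝ) ^ a) ^ b = ENNReal.ofReal ((2:ℝ) ^ (a * b)) := by
  rw [ENNReal.ofReal_rpow_of_pos (by positivity), Real.rpow_mul (by norm_num)]

private lemma ofReal_two_mul' (a b : ℝ) :
    ENNReal.ofReal ((2:ℝ) ^ a) * ENNReal.ofReal ((2:ℝ) ^ b) = ENNReal.ofReal ((2:ℝ) ^ (a + b)) := by
  rw [← ENNReal.ofReal_mul (by positivity), Real.rpow_add two_pos]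

private def eqGe (k : ℤ) : ℕ ≃ {j : ℤ // k ≤ j} where
  toFun m := ⟨k + m, by omega⟩
  invFun j := (j.1 - k).toNat
  left_inv m := by simp
  right_inv j := Subtype.ext (by have := j.2; simp; omega)

private def eqLe (L : ℤ) : ℕ ≃ {k : ℤ // k ≤ L} where
  toFun m := ⟨L - m, by omega⟩
  invFun k := (L - k.1).toNat
  left_inv m := by simp
  right_inv k := Subtype.ext (by have := k.2; simp; omega)

private lemma tsum_ge_eq (x : ℝ) (k : ℤ) :
    (∑' j : {j : ℤ // k ≤ j}, ENNReal.ofReal ((2:ℝ) ^ ((j.1:ℝ) * x))) =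
      ENNReal.ofReal ((2:ℝ) ^ ((k:ℝ) * x)) * ∑' m : ℕ, ENNReal.ofReal ((2:ℝ) ^ x) ^ m := by
  rw [← (eqGe k).tsum_eq, ← ENNReal.tsum_mul_left]
  refine tsum_congr fun m => ?_
  have h1 : (((eqGe k m).1 : ℤ) : ℝ) = (k : ℝ) + m := by simp [eqGe]
  rw [h1, add_mul, Real.rpow_add two_pos, ENNReal.ofReal_mul (by positivity)]
  congr 1
  rw [mul_comm, ← ofReal_rpow_two, ENNReal.rpow_natCast]

private lemma tsum_le_eq (y : ℝ) (L : ℤ) :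
    (∑' k : {k : ℤ // k ≤ L}, ENNReal.ofReal ((2:ℝ) ^ ((k.1:ℝ) * y))) =
      ENNReal.ofReal ((2:ℝ) ^ ((L:ℝ) * y)) * ∑' m : ℕ, ENNReal.ofReal ((2:ℝ) ^ (-y)) ^ m := by
  rw [← (eqLe L).tsum_eq, ← ENNReal.tsum_mul_left]
  refine tsum_congr fun m => ?_
  have h1 : (((eqLe L m).1 : ℤ) : ℝ) = (L : ℝ) - m := by simp [eqLe]
  rw [h1, show ((L:ℝ) - m) * y = (L:ℝ)*y + (m:ℝ)*(-y) by ring,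
    Real.rpow_add two_pos, ENNReal.ofReal_mul (by positivity)]
  congr 1
  rw [mul_comm, ← ofReal_rpow_two, ENNReal.rpow_natCast]

private lemma geom_ne_top {x : ℝ} (hx : x < 0) :
    (∑' m : ℕ, ENNReal.ofReal ((2:ℝ) ^ x) ^ m) ≠ ∞ := by
  rw [ENNReal.tsum_geometric]
  refine ENNReal.inv_ne_top.mpr ?_
  have h1 : ENNReal.ofReal ((2:ℝ)^x) < 1 :=
    ENNReal.ofReal_lt_one.mpr (Real.rpow_lt_one_of_one_lt_of_neg one_lt_two hx)
  exact (tsub_pos_of_lt h1).ne'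

private lemma one_le_geom (x : ℝ) : 1 ≤ ∑' m : ℕ, ENNReal.ofReal ((2:ℝ) ^ x) ^ m := by
  simpa using ENNReal.le_tsum (f := fun m : ℕ => ENNReal.ofReal ((2:ℝ)^x) ^ m) 0

open MeasureTheory
open scoped ENNReal

/-- The Riesz potential `I^β f (x) = ∫ f(y) ‖x - y‖^(β - n) dy` on `ℝⁿ`. -/
noncomputable def rieszPot (n : ℕ) (β : ℝ) (f : EuclideanSpace ℝ (Fin n) → ℝ)
    (x : EuclideanSpace ℝ (Fin n)) : ℝ :=
  ∫ y, f y * ‖x - y‖ ^ (β - (n : ℝ))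

/-- The dyadic annulus `F_k = B_k \ B_{k-1}`, where `B_k` is the closed ball of
radius `2^k` centred at the origin. -/
def annulus (n : ℕ) (k : ℤ) : Set (EuclideanSpace ℝ (Fin n)) :=
  Metric.closedBall 0 ((2 : ℝ) ^ k) \ Metric.closedBall 0 ((2 : ℝ) ^ (k - 1))

set_option maxHeartbeats 1000000 in
/-- estimate of
`sup_L 2^{-Lλq₁} ∑_{k ≤ L} 2^{kαq₁} (∑_{j ≥ k} λ_j ‖(I^β a_j)χ_{F_k}‖_{L^{p₂}})^{q₁}`
by `C sup_L 2^{-Lλq₁} ∑_{j ≤ L} λ_j^{q₁}`. -/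
theorem stmt_11 (n : ℕ) (hn : 1 ≤ n) (β p₁ p₂ q₁ α lam : ℝ)
    (hβ0 : 0 < β) (hβn : β < n) (hp₁ : 1 < p₁) (hp₁n : p₁ < n / β)
    (hp₂ : 1 / p₂ = 1 / p₁ - β / n) (hq₁ : 0 < q₁)
    (hlam : 0 < lam) (h2lam : 2 * lam < α)
    (C₀ : ℝ) (hC₀ : 0 < C₀)
    (hbound : ∀ g : EuclideanSpace ℝ (Fin n) → ℝ, MemLp g (ENNReal.ofReal p₁) volume →
      eLpNorm (rieszPot n β g) (ENNReal.ofReal p₂) volume ≤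
        ENNReal.ofReal C₀ * eLpNorm g (ENNReal.ofReal p₁) volume)
    (lamSeq : ℤ → ℝ) (hlamSeq : ∀ j, 0 ≤ lamSeq j)
    (a : ℤ → EuclideanSpace ℝ (Fin n) → ℝ)
    (ha_meas : ∀ j, Measurable (a j))
    (ha_supp : ∀ j, Function.support (a j) ⊆ Metric.closedBall 0 ((2 : ℝ) ^ j))
    (ha_norm : ∀ j : ℤ, eLpNorm (a j) (ENNReal.ofReal p₁) volume ≤
      ENNReal.ofReal ((2 : ℝ) ^ (-(j : ℝ) * α))) :
    ∃ C : ℝ, 0 < C ∧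
      (⨆ L : ℤ, ENNReal.ofReal ((2 : ℝ) ^ (-(L : ℝ) * lam * q₁)) *
          ∑' k : {k : ℤ // k ≤ L},
            ENNReal.ofReal ((2 : ℝ) ^ ((k.1 : ℝ) * α * q₁)) *
              (∑' j : {j : ℤ // (k : ℤ) ≤ j},
                  ENNReal.ofReal (lamSeq j.1) *
                    eLpNorm ((annulus n k.1).indicator (rieszPot n β (a j.1)))
                      (ENNReal.ofReal p₂) volume) ^ q₁) ≤
        ENNReal.ofReal C *
          ⨆ L : ℤ, ENNReal.ofReal ((2 : ℝ) ^ (-(L : ℝ) * lam * q₁)) *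
            ∑' j : {j : ℤ // j ≤ L}, ENNReal.ofReal (lamSeq j.1) ^ q₁ := by

  have hlamα : lam < α := by nlinarith
  have hq₁' : q₁ ≠ 0 := ne_of_gt hq₁
  set c₀ := ENNReal.ofReal C₀ with hc₀
  set G₁ := ∑' m : ℕ, ENNReal.ofReal ((2:ℝ) ^ (lam - α)) ^ m with hG₁
  set G₂ := ∑' m : ℕ, ENNReal.ofReal ((2:ℝ) ^ (-(lam * q₁))) ^ m with hG₂
  set S := ⨆ L : ℤ, ENNReal.ofReal ((2 : ℝ) ^ (-(L : ℝ) * lam * q₁)) *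
      ∑' j : {j : ℤ // j ≤ L}, ENNReal.ofReal (lamSeq j.1) ^ q₁ with hSdef
  set K := c₀ ^ q₁ * G₁ ^ q₁ * G₂ with hK
  have hG₁top : G₁ ≠ ∞ := geom_ne_top (by linarith)
  have hG₂top : G₂ ≠ ∞ := geom_ne_top (by nlinarith)
  have hKtop : K ≠ ∞ := by
    refine ENNReal.mul_ne_top (ENNReal.mul_ne_top ?_ ?_) hG₂top
    · exact ENNReal.rpow_ne_top_of_nonneg hq₁.le ENNReal.ofReal_ne_top
    · exact ENNReal.rpow_ne_top_of_nonneg hq₁.le hG₁top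
  -- pointwise bound on lamSeq
  have hlamj : ∀ j : ℤ, ENNReal.ofReal (lamSeq j) ≤
      ENNReal.ofReal ((2:ℝ) ^ ((j:ℝ) * lam)) * S ^ (1/q₁) := by
    intro j
    have h2 : ENNReal.ofReal ((2:ℝ) ^ (-(j:ℝ) * lam * q₁)) * ENNReal.ofReal (lamSeq j) ^ q₁ ≤ S := by
      rw [hSdef]
      refine le_trans ?_ (le_iSup (fun L : ℤ => ENNReal.ofReal ((2 : ℝ) ^ (-(L : ℝ) * lam * q₁)) *
        ∑' i : {i : ℤ // i ≤ L}, ENNReal.ofReal (lamSeq i.1) ^ q₁) j)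
      gcongr
      exact ENNReal.le_tsum (⟨j, le_refl j⟩ : {i : ℤ // i ≤ j})
    have h1 : ENNReal.ofReal (lamSeq j) ^ q₁ ≤ ENNReal.ofReal ((2:ℝ) ^ ((j:ℝ) * lam * q₁)) * S := by
      calc ENNReal.ofReal (lamSeq j) ^ q₁
          = ENNReal.ofReal ((2:ℝ) ^ ((j:ℝ) * lam * q₁)) *
            (ENNReal.ofReal ((2:ℝ) ^ (-(j:ℝ) * lam * q₁)) * ENNReal.ofReal (lamSeq j) ^ q₁) := by
            rw [← mul_assoc, ofReal_two_mul',
              show (j:ℝ) * lam * q₁ + -(j:ℝ) * lam * q₁ = 0 by ring]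
            simp
        _ ≤ _ := by gcongr
    have h3 := ENNReal.rpow_le_rpow h1 (le_of_lt (by positivity : (0:ℝ) < 1/q₁))
    rwa [← ENNReal.rpow_mul, mul_one_div_cancel hq₁', ENNReal.rpow_one,
      ENNReal.mul_rpow_of_nonneg _ _ (by positivity), ofReal_rpow_two,
      show ((j:ℝ) * lam * q₁) * (1/q₁) = (j:ℝ) * lam by field_simp] at h3
  -- norm bound
  have hnorm : ∀ j k : ℤ,
      eLpNorm ((annulus n k).indicator (rieszPot n β (a j))) (ENNReal.ofReal p₂) volume ≤
        c₀ * ENNReal.ofReal ((2:ℝ) ^ (-(j:ℝ) * α)) := by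
    intro j k
    calc eLpNorm ((annulus n k).indicator (rieszPot n β (a j))) (ENNReal.ofReal p₂) volume
        ≤ eLpNorm (rieszPot n β (a j)) (ENNReal.ofReal p₂) volume := eLpNorm_indicator_le _
      _ ≤ c₀ * eLpNorm (a j) (ENNReal.ofReal p₁) volume := by
          have hmem : MemLp (a j) (ENNReal.ofReal p₁) volume :=
            ⟨(ha_meas j).aestronglyMeasurable,
              lt_of_le_of_lt (ha_norm j) ENNReal.ofReal_lt_top⟩
          exact hbound (a j) hmem
      _ ≤ _ := mul_le_mul_right (ha_norm j) c₀
  -- inner sum bound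
  have hinner : ∀ k : ℤ,
      (∑' j : {j : ℤ // k ≤ j}, ENNReal.ofReal (lamSeq j.1) *
        eLpNorm ((annulus n k).indicator (rieszPot n β (a j.1))) (ENNReal.ofReal p₂) volume) ≤
      c₀ * S ^ (1/q₁) * G₁ * ENNReal.ofReal ((2:ℝ) ^ ((k:ℝ) * (lam - α))) := by
    intro k
    have hpt : ∀ j : {j : ℤ // k ≤ j},
        ENNReal.ofReal (lamSeq j.1) *
          eLpNorm ((annulus n k).indicator (rieszPot n β (a j.1))) (ENNReal.ofReal p₂) volume ≤
        (c₀ * S ^ (1/q₁)) * ENNReal.ofReal ((2:ℝ) ^ ((j.1:ℝ) * (lam - α))) := by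
      intro j
      calc ENNReal.ofReal (lamSeq j.1) *
            eLpNorm ((annulus n k).indicator (rieszPot n β (a j.1))) (ENNReal.ofReal p₂) volume
          ≤ (ENNReal.ofReal ((2:ℝ) ^ ((j.1:ℝ) * lam)) * S ^ (1/q₁)) *
            (c₀ * ENNReal.ofReal ((2:ℝ) ^ (-(j.1:ℝ) * α))) :=
            mul_le_mul' (hlamj j.1) (hnorm j.1 k)
        _ = _ := by
            rw [show (j.1:ℝ) * (lam - α) = (j.1:ℝ) * lam + -(j.1:ℝ) * α by ring, ← ofReal_two_mul']
            ring
    calc (∑' j : {j : ℤ // k ≤ j}, ENNReal.ofReal (lamSeq j.1) *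
          eLpNorm ((annulus n k).indicator (rieszPot n β (a j.1))) (ENNReal.ofReal p₂) volume)
        ≤ ∑' j : {j : ℤ // k ≤ j},
            (c₀ * S ^ (1/q₁)) * ENNReal.ofReal ((2:ℝ) ^ ((j.1:ℝ) * (lam - α))) :=
          ENNReal.tsum_le_tsum hpt
      _ = (c₀ * S ^ (1/q₁)) *
          ∑' j : {j : ℤ // k ≤ j}, ENNReal.ofReal ((2:ℝ) ^ ((j.1:ℝ) * (lam - α))) :=
          ENNReal.tsum_mul_left
      _ = _ := by rw [tsum_ge_eq, ← hG₁]; ring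
  -- per-k bound
  have hk : ∀ k : ℤ, ENNReal.ofReal ((2:ℝ) ^ ((k:ℝ) * α * q₁)) *
      (∑' j : {j : ℤ // k ≤ j}, ENNReal.ofReal (lamSeq j.1) *
        eLpNorm ((annulus n k).indicator (rieszPot n β (a j.1))) (ENNReal.ofReal p₂) volume) ^ q₁ ≤
      (c₀ ^ q₁ * G₁ ^ q₁ * S) * ENNReal.ofReal ((2:ℝ) ^ ((k:ℝ) * (lam * q₁))) := by
    intro k
    have h1 := ENNReal.rpow_le_rpow (hinner k) hq₁.le
    have h2 : (c₀ * S ^ (1/q₁) * G₁ * ENNReal.ofReal ((2:ℝ) ^ ((k:ℝ) * (lam - α)))) ^ q₁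
        = c₀ ^ q₁ * S * G₁ ^ q₁ * ENNReal.ofReal ((2:ℝ) ^ ((k:ℝ) * (lam - α) * q₁)) := by
      rw [ENNReal.mul_rpow_of_nonneg _ _ hq₁.le, ENNReal.mul_rpow_of_nonneg _ _ hq₁.le,
        ENNReal.mul_rpow_of_nonneg _ _ hq₁.le, ofReal_rpow_two,
        ← ENNReal.rpow_mul, one_div_mul_cancel hq₁', ENNReal.rpow_one]
    rw [h2] at h1
    calc ENNReal.ofReal ((2:ℝ) ^ ((k:ℝ) * α * q₁)) *
        (∑' j : {j : ℤ // k ≤ j}, ENNReal.ofReal (lamSeq j.1) *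
          eLpNorm ((annulus n k).indicator (rieszPot n β (a j.1))) (ENNReal.ofReal p₂) volume) ^ q₁
        ≤ ENNReal.ofReal ((2:ℝ) ^ ((k:ℝ) * α * q₁)) *
          (c₀ ^ q₁ * S * G₁ ^ q₁ * ENNReal.ofReal ((2:ℝ) ^ ((k:ℝ) * (lam - α) * q₁))) :=
          mul_le_mul_right h1 _
      _ = (c₀ ^ q₁ * G₁ ^ q₁ * S) *
          (ENNReal.ofReal ((2:ℝ) ^ ((k:ℝ) * α * q₁)) *
            ENNReal.ofReal ((2:ℝ) ^ ((k:ℝ) * (lam - α) * q₁))) := by ring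
      _ = _ := by
          rw [ofReal_two_mul',
            show (k:ℝ) * α * q₁ + (k:ℝ) * (lam - α) * q₁ = (k:ℝ) * (lam * q₁) by ring]
  -- conclusion
  refine ⟨K.toReal + 1, by positivity, ?_⟩
  have hCK : K ≤ ENNReal.ofReal (K.toReal + 1) := by
    calc K = ENNReal.ofReal K.toReal := (ENNReal.ofReal_toReal hKtop).symm
      _ ≤ _ := ENNReal.ofReal_le_ofReal (by linarith)
  refine le_trans (iSup_le fun L => ?_) (mul_le_mul_left hCK S)
  have h6 := mul_le_mul_right (ENNReal.tsum_le_tsum fun k : {k : ℤ // k ≤ L} => hk k.1)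
    (ENNReal.ofReal ((2:ℝ) ^ (-(L:ℝ) * lam * q₁)))
  refine le_trans h6 ?_
  rw [ENNReal.tsum_mul_left, tsum_le_eq, ← hG₂]
  have e2 : ENNReal.ofReal ((2 : ℝ) ^ (-(L : ℝ) * lam * q₁)) *
      ENNReal.ofReal ((2:ℝ) ^ ((L:ℝ) * (lam * q₁))) = 1 := by
    rw [ofReal_two_mul', show -(L : ℝ) * lam * q₁ + (L:ℝ) * (lam * q₁) = 0 by ring]
    simp
  have e : ENNReal.ofReal ((2 : ℝ) ^ (-(L : ℝ) * lam * q₁)) *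
      ((c₀ ^ q₁ * G₁ ^ q₁ * S) * (ENNReal.ofReal ((2:ℝ) ^ ((L:ℝ) * (lam * q₁))) * G₂))
      = K * S := by
    calc ENNReal.ofReal ((2 : ℝ) ^ (-(L : ℝ) * lam * q₁)) *
        ((c₀ ^ q₁ * G₁ ^ q₁ * S) * (ENNReal.ofReal ((2:ℝ) ^ ((L:ℝ) * (lam * q₁))) * G₂))
        = (c₀ ^ q₁ * G₁ ^ q₁ * G₂) * S *
          (ENNReal.ofReal ((2 : ℝ) ^ (-(L : ℝ) * lam * q₁)) *
            ENNReal.ofReal ((2:ℝ) ^ ((L:ℝ) * (lam * q₁)))) := by ring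
      _ = K * S := by rw [e2, hK]; ring
  exact e.le
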